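/- Fix c ∈ [0,1] with k(c) > 0. Then for every x > β*(c), (1/2)σ² u″(x; c) + θ(μ − x) u′(x; c) − λ u(x; c) = θμ − k(c)x, while for every x < β*(c) this expression equals 0; consequently, for every x ∈ ℝ with x ≠ β*(c), (1/2)σ² u″(x; c) + θ(μ − x) u′(x; c) − λ u(x; c) ≤ θμ − k(c)x. -/

import Mathlib

open MeasureTheory Real Set Filter
open scoped Topology

/-- The (positive multiple of the) strictly decreasing fundamental solution `φ_λ` of the
Ornstein–Uhlenbeck equation `(1/2)σ² f'' + θ(μ - x) f' = λ f`, written as the integral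
`φ(x) = ∫₀^∞ t^(λ/θ - 1) exp(-t²/2 - a t (x - μ)) dt` with `a = √(2θ)/σ`. -/
noncomputable def OUphi (lam th mu sig : ℝ) (x : ℝ) : ℝ :=
  ∫ t in Set.Ioi (0:ℝ),
    t ^ (lam / th - 1) * Real.exp (-t ^ 2 / 2 - Real.sqrt (2 * th) / sig * t * (x - mu))

/-- `k(c) = λ + θ + λ Φ'(c)`. -/
noncomputable def kfun (lam th : ℝ) (Phi : ℝ → ℝ) (c : ℝ) : ℝ :=
  lam + th + lam * deriv Phi c

/-- `G(x; c) = μ(k(c) - θ)/λ + k(c)(x - μ)/(λ + θ)`. -/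
noncomputable def Gfun (lam th mu : ℝ) (Phi : ℝ → ℝ) (x c : ℝ) : ℝ :=
  mu * (kfun lam th Phi c - th) / lam + kfun lam th Phi c * (x - mu) / (lam + th)

/-- `x₀(c) = -θμΦ'(c)/k(c)`. -/
noncomputable def x0fun (lam th mu : ℝ) (Phi : ℝ → ℝ) (c : ℝ) : ℝ :=
  -(th * mu * deriv Phi c) / kfun lam th Phi c

/-- The smooth-fit function `H(x;c) = (k(c)/(λ+θ)) φ(x) - G(x;c) φ'(x)`. -/
noncomputable def Hfun (lam th mu sig : ℝ) (Phi : ℝ → ℝ) (x c : ℝ) : ℝ :=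
  kfun lam th Phi c / (lam + th) * OUphi lam th mu sig x
    - Gfun lam th mu Phi x c * deriv (OUphi lam th mu sig) x

/-- The candidate value function of the optimal stopping problem:
`u(x;c) = G(x;c) - (G(β;c)/φ(β)) φ(x)` for `x > β` and `u(x;c) = 0` for `x ≤ β`. -/
noncomputable def ufun (lam th mu sig : ℝ) (Phi : ℝ → ℝ) (b : ℝ) (x c : ℝ) : ℝ :=
  if b < x then
    Gfun lam th mu Phi x c
      - Gfun lam th mu Phi b c / OUphi lam th mu sig b * OUphi lam th mu sig x
  else 0

noncomputable def psiInt (p b : ℝ) : ℝ :=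
  ∫ t in Set.Ioi (0:ℝ), t ^ p * Real.exp (-t ^ 2 / 2 - b * t)

lemma psi_meas (p b : ℝ) :
    AEStronglyMeasurable (fun t : ℝ => t ^ p * Real.exp (-t ^ 2 / 2 - b * t))
      (volume.restrict (Set.Ioi 0)) := by
  apply ContinuousOn.aestronglyMeasurable ?_ measurableSet_Ioi
  exact (continuousOn_id.rpow_const (fun x hx => Or.inl (ne_of_gt hx))).mul
    (Continuous.continuousOn (by continuity))

lemma psi_integrable {p : ℝ} (hp : -1 < p) (b : ℝ) :
    IntegrableOn (fun t : ℝ => t ^ p * Real.exp (-t ^ 2 / 2 - b * t)) (Set.Ioi 0) := by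
  have hbd : IntegrableOn
      (fun t : ℝ => Real.exp (b ^ 2) * (t ^ p * Real.exp (-4⁻¹ * t ^ 2))) (Set.Ioi 0) :=
    (integrableOn_rpow_mul_exp_neg_mul_sq (by norm_num) hp).const_mul _
  refine hbd.mono' (psi_meas p b) ?_
  filter_upwards [ae_restrict_mem measurableSet_Ioi] with t ht
  have ht0 : (0:ℝ) < t := ht
  rw [Real.norm_eq_abs, abs_of_nonneg (by positivity)]
  rw [show Real.exp (b^2) * (t^p * Real.exp (-4⁻¹*t^2))
      = t^p * (Real.exp (b^2) * Real.exp (-4⁻¹*t^2)) by ring, ← Real.exp_add]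
  refine mul_le_mul_of_nonneg_left ?_ (by positivity)
  apply Real.exp_le_exp.mpr
  nlinarith [sq_nonneg (t/2 + b)]

lemma psi_hasDerivAt {p : ℝ} (hp : -1 < p) (b : ℝ) :
    HasDerivAt (fun b => psiInt p b) (-psiInt (p+1) b) b := by
  have key := hasDerivAt_integral_of_dominated_loc_of_deriv_le
    (F := fun x t => t ^ p * Real.exp (-t ^ 2 / 2 - x * t))
    (F' := fun x (t : ℝ) => -(t ^ (p+1) * Real.exp (-t ^ 2 / 2 - x * t)))
    (μ := volume.restrict (Set.Ioi 0)) (x₀ := b)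
    (bound := fun t => Real.exp ((|b|+1)^2) * (t ^ (p+1) * Real.exp (-4⁻¹ * t ^ 2)))
    (Metric.ball_mem_nhds b one_pos)
    (Eventually.of_forall fun x => psi_meas p x)
    (psi_integrable hp b)
    ((psi_meas (p+1) b).neg)
    ?_ (((integrableOn_rpow_mul_exp_neg_mul_sq (by norm_num) (by linarith)).const_mul _))
    ?_
  · have h2 := key.2
    have : (∫ t in Set.Ioi (0:ℝ), -(t ^ (p+1) * Real.exp (-t ^ 2 / 2 - b * t)))
        = -psiInt (p+1) b := by
      rw [integral_neg]; rfl
    rw [this] at h2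
    exact h2
  · -- bound
    filter_upwards [ae_restrict_mem measurableSet_Ioi] with t ht x hx
    have ht0 : (0:ℝ) < t := ht
    have hxb : |x - b| < 1 := by
      have := mem_ball_iff_norm.mp hx; simpa [Real.norm_eq_abs] using this
    have h1 : -(|b|+1) ≤ x := by
      have h2 := (abs_lt.mp hxb).1
      have := neg_abs_le b
      linarith
    rw [norm_neg, Real.norm_eq_abs, abs_of_nonneg (by positivity)]
    rw [show Real.exp ((|b|+1)^2) * (t^(p+1) * Real.exp (-4⁻¹*t^2))
        = t^(p+1) * (Real.exp ((|b|+1)^2) * Real.exp (-4⁻¹*t^2)) by ring, ← Real.exp_add]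
    refine mul_le_mul_of_nonneg_left ?_ (by positivity)
    apply Real.exp_le_exp.mpr
    have hxt : -((|b|+1)*t) ≤ x * t := by nlinarith
    nlinarith [sq_nonneg (|b| + 1 - t/2)]
  · -- differentiability
    filter_upwards [ae_restrict_mem measurableSet_Ioi] with t ht x _
    have ht0 : (0:ℝ) < t := ht
    have h1 : HasDerivAt (fun x : ℝ => -t^2/2 - x*t) (-t) x := by
      simpa using (hasDerivAt_mul_const t).const_sub (-t^2/2)
    have h2 := (h1.exp).const_mul (t ^ p)
    refine h2.congr_deriv ?_
    rw [Real.rpow_add_one (ne_of_gt ht0)]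
    ring

lemma psi_tendsto_zero (p b : ℝ) :
    Tendsto (fun t : ℝ => t ^ p * Real.exp (-t ^ 2 / 2 - b * t)) atTop (𝓝 0) := by
  apply squeeze_zero' (g := fun t : ℝ => t ^ p * Real.exp (-1 * t))
  · filter_upwards [eventually_gt_atTop 0] with t ht
    positivity
  · filter_upwards [eventually_gt_atTop 0, eventually_ge_atTop (2*(1-b))] with t ht0 htb
    refine mul_le_mul_of_nonneg_left ?_ (by positivity)
    apply Real.exp_le_exp.mpr
    nlinarith
  · exact tendsto_rpow_mul_exp_neg_mul_atTop_nhds_zero p 1 one_pos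

lemma psi_ibp {p : ℝ} (hp : 0 < p) (b : ℝ) :
    psiInt (p+1) b + b * psiInt p b = p * psiInt (p-1) b := by
  set E : ℝ → ℝ := fun t => Real.exp (-t ^ 2 / 2 - b * t) with hE
  have key := integral_Ioi_of_hasDerivAt_of_tendsto
    (f := fun t : ℝ => -(t ^ p * E t))
    (f' := fun t : ℝ => t ^ (p+1) * E t + b * (t ^ p * E t) - p * (t ^ (p-1) * E t))
    (a := 0) (m := 0)
    ?_ ?_ ?_ ?_
  · have h1 := psi_integrable (by linarith : (-1:ℝ) < p + 1) b
    have h2 := psi_integrable (by linarith : (-1:ℝ) < p) b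
    have h3 := psi_integrable (by linarith : (-1:ℝ) < p - 1) b
    have hA : IntegrableOn (fun t : ℝ => t ^ (p+1) * E t + b * (t ^ p * E t)) (Set.Ioi 0) :=
      h1.add (h2.const_mul b)
    have hB : IntegrableOn (fun t : ℝ => p * (t ^ (p-1) * E t)) (Set.Ioi 0) := h3.const_mul p
    rw [integral_sub hA hB, integral_add h1 (h2.const_mul b), integral_const_mul, integral_const_mul] at key
    have h0 : (0:ℝ) ^ p = 0 := Real.zero_rpow (ne_of_gt hp)
    simp only [hE] at key
    rw [show -((0:ℝ) ^ p * Real.exp (-(0:ℝ) ^ 2 / 2 - b * 0)) = 0 by rw [h0]; ring] at key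
    have : psiInt (p+1) b + b * psiInt p b - p * psiInt (p-1) b = 0 - 0 := key
    linarith
  · -- continuity at 0 within Ici 0
    apply ContinuousAt.continuousWithinAt
    refine ((Real.continuousAt_rpow_const 0 p (Or.inr hp.le)).mul ?_).neg
    exact (Real.continuous_exp.comp (by continuity)).continuousAt
  · -- derivative on Ioi 0
    intro t ht
    have ht0 : (0:ℝ) < t := ht
    have hr : HasDerivAt (fun t : ℝ => t ^ p) (p * t ^ (p-1)) t :=
      Real.hasDerivAt_rpow_const (Or.inl (ne_of_gt ht0))
    have hg : HasDerivAt (fun t : ℝ => -t ^ 2 / 2 - b * t) (-t - b) t := by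
      have hq : HasDerivAt (fun t : ℝ => -t ^ 2 / 2) (-t) t := by
        have h := (hasDerivAt_pow 2 t).neg.div_const 2
        exact h.congr_deriv (by ring)
      exact (hq.sub ((hasDerivAt_id t).const_mul b)).congr_deriv (by ring)
    have := (hr.mul hg.exp).neg
    refine this.congr_deriv ?_
    simp only [hE, Real.rpow_add_one (ne_of_gt ht0)]
    ring
  · -- integrability of f'
    exact ((psi_integrable (by linarith) b).add
      ((psi_integrable (by linarith) b).const_mul b)).sub
      ((psi_integrable (by linarith) b).const_mul p)
  · simpa using (psi_tendsto_zero p b).neg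



lemma OUphi_eq (lam th mu sig x : ℝ) :
    OUphi lam th mu sig x = psiInt (lam / th - 1) (Real.sqrt (2 * th) / sig * (x - mu)) := by
  simp only [OUphi, psiInt,
    show ∀ t : ℝ, Real.sqrt (2 * th) / sig * t * (x - mu)
      = Real.sqrt (2 * th) / sig * (x - mu) * t from fun t => by ring]

section
variable {lam th mu sig : ℝ}

lemma OUphi_hasDerivAt (hlam : 0 < lam) (hth : 0 < th) (x : ℝ) :
    HasDerivAt (OUphi lam th mu sig)
      (-(Real.sqrt (2 * th) / sig * psiInt (lam / th)
          (Real.sqrt (2 * th) / sig * (x - mu)))) x := by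
  set a := Real.sqrt (2 * th) / sig with ha
  have h1 : HasDerivAt (fun x : ℝ => a * (x - mu)) a x := by
    simpa using ((hasDerivAt_id x).sub_const mu).const_mul a
  have hp : (-1:ℝ) < lam / th - 1 := by
    have := div_pos hlam hth; linarith
  have h2 := (psi_hasDerivAt hp (a * (x - mu))).comp x h1
  have h3 : HasDerivAt (fun x : ℝ => psiInt (lam / th - 1) (a * (x - mu)))
      (-psiInt (lam / th - 1 + 1) (a * (x - mu)) * a) x := h2
  have hfe : (fun x : ℝ => psiInt (lam / th - 1) (a * (x - mu))) = OUphi lam th mu sig :=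
    funext fun y => (OUphi_eq lam th mu sig y).symm
  rw [hfe] at h3
  convert h3 using 1
  rw [show lam / th - 1 + 1 = lam / th by ring]
  ring

lemma OUphi_deriv2 (hlam : 0 < lam) (hth : 0 < th) (x : ℝ) :
    HasDerivAt (fun x : ℝ =>
        -(Real.sqrt (2 * th) / sig * psiInt (lam / th)
          (Real.sqrt (2 * th) / sig * (x - mu))))
      ((Real.sqrt (2 * th) / sig) ^ 2 * psiInt (lam / th + 1)
          (Real.sqrt (2 * th) / sig * (x - mu))) x := by
  set a := Real.sqrt (2 * th) / sig with ha
  have h1 : HasDerivAt (fun x : ℝ => a * (x - mu)) a x := by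
    simpa using ((hasDerivAt_id x).sub_const mu).const_mul a
  have hp : (-1:ℝ) < lam / th := by
    have := div_pos hlam hth; linarith
  have h2 := (((psi_hasDerivAt hp (a * (x - mu))).comp x h1).const_mul a).neg
  have h3 : HasDerivAt (fun x : ℝ =>
      -(a * psiInt (lam / th) (a * (x - mu))))
      (-(a * (-psiInt (lam / th + 1) (a * (x - mu)) * a))) x := h2
  convert h3 using 1
  ring

lemma OUphi_ode (hlam : 0 < lam) (hth : 0 < th) (hsig : 0 < sig) (x : ℝ) :
    1 / 2 * sig ^ 2 * ((Real.sqrt (2 * th) / sig) ^ 2 * psiInt (lam / th + 1)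
        (Real.sqrt (2 * th) / sig * (x - mu)))
      + th * (mu - x) * (-(Real.sqrt (2 * th) / sig * psiInt (lam / th)
        (Real.sqrt (2 * th) / sig * (x - mu))))
      = lam * OUphi lam th mu sig x := by
  set a := Real.sqrt (2 * th) / sig with ha
  set b := a * (x - mu) with hb
  have ha2 : a ^ 2 = 2 * th / sig ^ 2 := by
    rw [ha, div_pow, Real.sq_sqrt (by positivity)]
  have hibp := psi_ibp (div_pos hlam hth) b
  have hibp' : th * psiInt (lam / th + 1) b + th * b * psiInt (lam / th) b
      = lam * psiInt (lam / th - 1) b := by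
    have h := congrArg (fun z => th * z) hibp
    rw [show th * (lam / th * psiInt (lam / th - 1) b)
      = lam * psiInt (lam / th - 1) b by field_simp] at h
    linarith [h]
  rw [OUphi_eq, ← hb]
  have hs2 : sig ^ 2 ≠ 0 := by positivity
  set P2 := psiInt (lam / th + 1) b
  set P1 := psiInt (lam / th) b
  set P0 := psiInt (lam / th - 1) b
  have key : 1 / 2 * sig ^ 2 * (a ^ 2) = th := by
    rw [ha2]; field_simp
  linear_combination hibp' + P2 * key - th * P1 * hb

end

/-- fix `c ∈ [0,1]` with `k(c) > 0` and let `β = β*(c)` be the unique zero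
of `H(·;c)` (with `β < x₀(c)` and `β < θμ/k(c)`). Then for `x > β`,
`(1/2)σ² u'' + θ(μ-x) u' - λ u = θμ - k(c)x`, for `x < β` this expression is `0`, and
consequently it is `≤ θμ - k(c)x` for every `x ≠ β`. -/
theorem statement9 (lam th mu sig : ℝ)
    (hlam : 0 < lam) (hth : 0 < th) (hmu : 0 < mu) (hsig : 0 < sig)
    (Phi : ℝ → ℝ) (hPhiC2 : ContDiff ℝ 2 Phi)
    (hPhiconv : StrictConvexOn ℝ Set.univ Phi)
    (hPhi' : ∀ c ∈ Set.Icc (0:ℝ) 1, deriv Phi c < 0) (hPhi1 : Phi 1 = 0)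
    (c : ℝ) (hc : c ∈ Set.Icc (0:ℝ) 1) (hk : 0 < kfun lam th Phi c)
    (beta : ℝ)
    (hbeta0 : Hfun lam th mu sig Phi beta c = 0)
    (hbetau : ∀ y : ℝ, Hfun lam th mu sig Phi y c = 0 → y = beta)
    (hbetax0 : beta < x0fun lam th mu Phi c)
    (hbetahat : beta < th * mu / kfun lam th Phi c) :
    (∀ x : ℝ, beta < x →
      1 / 2 * sig ^ 2 * deriv (deriv (fun x => ufun lam th mu sig Phi beta x c)) x
        + th * (mu - x) * deriv (fun x => ufun lam th mu sig Phi beta x c) x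
        - lam * ufun lam th mu sig Phi beta x c
      = th * mu - kfun lam th Phi c * x) ∧
    (∀ x : ℝ, x < beta →
      1 / 2 * sig ^ 2 * deriv (deriv (fun x => ufun lam th mu sig Phi beta x c)) x
        + th * (mu - x) * deriv (fun x => ufun lam th mu sig Phi beta x c) x
        - lam * ufun lam th mu sig Phi beta x c
      = 0) ∧
    (∀ x : ℝ, x ≠ beta →
      1 / 2 * sig ^ 2 * deriv (deriv (fun x => ufun lam th mu sig Phi beta x c)) x
        + th * (mu - x) * deriv (fun x => ufun lam th mu sig Phi beta x c) x
        - lam * ufun lam th mu sig Phi beta x c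
      ≤ th * mu - kfun lam th Phi c * x) := by
  have hlt : (0:ℝ) < lam + th := by linarith
  set a : ℝ := Real.sqrt (2 * th) / sig with ha
  set K : ℝ := kfun lam th Phi c with hK
  set C : ℝ := Gfun lam th mu Phi beta c / OUphi lam th mu sig beta with hC
  set u : ℝ → ℝ := fun x => ufun lam th mu sig Phi beta x c with hu
  set v : ℝ → ℝ :=
    fun x => Gfun lam th mu Phi x c - C * OUphi lam th mu sig x with hv
  set v' : ℝ → ℝ :=
    fun x => K / (lam + th) - C * (-(a * psiInt (lam / th) (a * (x - mu)))) with hv'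
  -- derivative of G
  have hG : ∀ y : ℝ, HasDerivAt (fun x => Gfun lam th mu Phi x c) (K / (lam + th)) y := by
    intro y
    have h1 : HasDerivAt (fun x : ℝ => mu * (K - th) / lam + K * (x - mu) / (lam + th))
        (K * 1 / (lam + th)) y :=
      ((((hasDerivAt_id y).sub_const mu).const_mul K).div_const (lam + th)).const_add _
    simp only [mul_one] at h1
    exact h1
  have hvd : ∀ y : ℝ, HasDerivAt v (v' y) y := fun y =>
    (hG y).sub ((OUphi_hasDerivAt hlam hth y).const_mul C)
  have hvd' : ∀ y : ℝ, HasDerivAt v'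
      (-(C * (a ^ 2 * psiInt (lam / th + 1) (a * (y - mu))))) y := fun y =>
    ((OUphi_deriv2 hlam hth y).const_mul C).const_sub (K / (lam + th))
  have hdv : deriv v = v' := funext fun y => (hvd y).deriv
  -- Part 1
  have HA : ∀ x : ℝ, beta < x →
      1 / 2 * sig ^ 2 * deriv (deriv u) x + th * (mu - x) * deriv u x - lam * u x
        = th * mu - K * x := by
    intro x hx
    have huv : u =ᶠ[𝓝 x] v := by
      filter_upwards [Ioi_mem_nhds hx] with y hy
      simp only [hu, hv, ufun, if_pos (show beta < y from hy), hC]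
    have e0 : u x = Gfun lam th mu Phi x c - C * OUphi lam th mu sig x := huv.eq_of_nhds
    have e1 : deriv u x = v' x := by rw [huv.deriv_eq, (hvd x).deriv]
    have e2 : deriv (deriv u) x = -(C * (a ^ 2 * psiInt (lam / th + 1) (a * (x - mu)))) := by
      rw [huv.deriv.deriv_eq, hdv, (hvd' x).deriv]
    rw [e0, e1, e2, hv']
    have hode := OUphi_ode (mu := mu) hlam hth hsig x
    have hGid : th * (mu - x) * (K / (lam + th)) - lam * Gfun lam th mu Phi x c
        = th * mu - K * x := by
      simp only [Gfun, ← hK]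
      field_simp
      ring
    rw [← ha] at hode
    linear_combination hGid - C * hode
  -- Part 2
  have HB : ∀ x : ℝ, x < beta →
      1 / 2 * sig ^ 2 * deriv (deriv u) x + th * (mu - x) * deriv u x - lam * u x = 0 := by
    intro x hx
    have huv : u =ᶠ[𝓝 x] fun _ => (0:ℝ) := by
      filter_upwards [Iio_mem_nhds hx] with y hy
      simp only [hu, ufun, if_neg (not_lt.mpr (le_of_lt (mem_Iio.mp hy)))]
    have e0 : u x = 0 := huv.eq_of_nhds
    have e1 : deriv u x = 0 := by rw [huv.deriv_eq, deriv_const]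
    have e2 : deriv (deriv u) x = 0 := by
      rw [huv.deriv.deriv_eq]
      simp
    rw [e0, e1, e2]
    ring
  refine ⟨HA, HB, fun x hx => ?_⟩
  rcases hx.lt_or_gt with h | h
  · rw [HB x h]
    have hbk : beta * K < th * mu := (lt_div_iff₀ hk).mp hbetahat
    nlinarith
  · exact le_of_eq (HA x h)
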